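/- arXiv:1905.01605 — 2 statements merged into one kernel-verified Lean document; each statement's English description precedes it below -/
import Mathlib

section
/- Let a and b be distinct points on the unit circle in the Euclidean plane ℝ² (‖a‖ = ‖b‖ = 1), and let n be a unit vector orthogonal to b − a chosen outward, i.e., with ⟨n, a + b⟩ ≥ 0. Then every point x ≠ 0 on the closed segment joining a and b satisfies ‖n − x/‖x‖‖ ≤ ‖a − b‖. -/
open scoped RealInnerProductSpace

/-- In `ℝ²`, if `n` and `u` are both orthogonal to a nonzero vector `v` and `n` is a unit
vector, then `⟪n, u⟫² = ‖u‖²`. -/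
lemma chord_normal_key (n u v : EuclideanSpace ℝ (Fin 2)) (hv : v ≠ 0)
    (hnv : ⟪n, v⟫ = 0) (huv : ⟪u, v⟫ = 0) (hn : ‖n‖ = 1) :
    ⟪n, u⟫ ^ 2 = ‖u‖ ^ 2 := by
  have hn2 : ⟪n, n⟫ = 1 := by
    rw [real_inner_self_eq_norm_sq, hn]; norm_num
  have hu2 : ⟪u, u⟫ = ‖u‖ ^ 2 := real_inner_self_eq_norm_sq u
  simp only [PiLp.inner_apply, RCLike.inner_apply, conj_trivial, Fin.sum_univ_two] at *
  have hvi : v 0 ≠ 0 ∨ v 1 ≠ 0 := by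
    by_contra h
    push_neg at h
    apply hv
    ext i
    fin_cases i <;> simp [h.1, h.2]
  have hdet : n 0 * u 1 - n 1 * u 0 = 0 := by
    rcases hvi with h | h
    · have : (n 0 * u 1 - n 1 * u 0) * v 0 = 0 := by linear_combination u 1 * hnv - n 1 * huv
      exact (mul_eq_zero.mp this).resolve_right h
    · have : (n 0 * u 1 - n 1 * u 0) * v 1 = 0 := by linear_combination n 0 * huv - u 0 * hnv
      exact (mul_eq_zero.mp this).resolve_right h
  rw [← hu2]
  nlinarith [hn2, hdet]

/-- Normal-vector boundary-skin estimate for a chord of the unit circle: if `a ≠ b`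
lie on the unit circle in `ℝ²` and `n` is the outward unit normal of the chord
(`n ⟂ b - a`, `⟪n, a + b⟫ ≥ 0`), then for every `x ≠ 0` on the segment `[a, b]`,
`‖n - x/‖x‖‖ ≤ ‖a - b‖`. -/
theorem chord_normal_estimate
    (a b : EuclideanSpace ℝ (Fin 2)) (ha : ‖a‖ = 1) (hb : ‖b‖ = 1) (hab : a ≠ b)
    (n : EuclideanSpace ℝ (Fin 2)) (hn : ‖n‖ = 1)
    (horth : ⟪n, b - a⟫ = 0) (hout : 0 ≤ ⟪n, a + b⟫) :
    ∀ x ∈ segment ℝ a b, x ≠ 0 → ‖n - ‖x‖⁻¹ • x‖ ≤ ‖a - b‖ := by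
  intro x hx hx0
  set p : ℝ := ⟪a, b⟫ with hp
  have hp1 : p ≤ 1 := by
    rw [hp]
    have := real_inner_le_norm a b
    rw [ha, hb] at this; linarith
  -- n has equal inner product with a and b
  have hcb : ⟪n, b⟫ = ⟪n, a⟫ := by
    have := horth
    rw [inner_sub_right] at this
    linarith
  set c : ℝ := ⟪n, a⟫ with hc
  have hout' : (0:ℝ) ≤ 2 * c := by
    have := hout
    rw [inner_add_right, hcb] at this
    linarith
  have hc0 : 0 ≤ c := by linarith
  -- a+b orthogonal to b-a
  have habo : ⟪a + b, b - a⟫ = 0 := by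
    rw [inner_sub_right, inner_add_left, inner_add_left]
    have h1 : ⟪a, a⟫ = 1 := by rw [real_inner_self_eq_norm_sq, ha]; norm_num
    have h2 : ⟪b, b⟫ = 1 := by rw [real_inner_self_eq_norm_sq, hb]; norm_num
    have h3 : ⟪b, a⟫ = ⟪a, b⟫ := (real_inner_comm b a).symm
    linarith
  have hba0 : b - a ≠ 0 := sub_ne_zero.mpr (Ne.symm hab)
  -- the key dimension-two fact
  have hkey : (2 * c) ^ 2 = 2 + 2 * p := by
    have := chord_normal_key n (a + b) (b - a) hba0 horth habo hn
    have h1 : ⟪n, a + b⟫ = 2 * c := by rw [inner_add_right, hcb]; ring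
    have h2 : ‖a + b‖ ^ 2 = 2 + 2 * p := by
      rw [norm_add_sq_real, ha, hb]; ring
    rw [h1, h2] at this
    exact this
  -- c ≥ p when p ≥ 0, in general c ≥ p * ‖x‖ with ‖x‖ ≤ 1
  have hxle : ‖x‖ ≤ 1 := by
    have hmem : x ∈ Metric.closedBall (0 : EuclideanSpace ℝ (Fin 2)) 1 := by
      apply (convex_closedBall (0 : EuclideanSpace ℝ (Fin 2)) 1).segment_subset _ _ hx
      · simp [ha]
      · simp [hb]
    simpa using hmem
  have hxpos : 0 < ‖x‖ := norm_pos_iff.mpr hx0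
  -- inner product of n with x equals c
  have hnx : ⟪n, x⟫ = c := by
    obtain ⟨s, t, hs, ht, hst, hxe⟩ := hx
    rw [← hxe, inner_add_right, real_inner_smul_right, real_inner_smul_right, hcb, hc]
    nlinarith [hst]
  have hnu : ⟪n, ‖x‖⁻¹ • x⟫ = ‖x‖⁻¹ * c := by
    rw [real_inner_smul_right, hnx]
  have hu1 : ‖‖x‖⁻¹ • x‖ = 1 := by
    rw [norm_smul, norm_inv, norm_norm, inv_mul_cancel₀ hxpos.ne']
  -- main inequality on inner products: ⟪n, u⟫ ≥ p
  have hmain : p ≤ ‖x‖⁻¹ * c := by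
    rcases le_or_gt p 0 with hple | hpgt
    · have : 0 ≤ ‖x‖⁻¹ * c := mul_nonneg (inv_nonneg.mpr hxpos.le) hc0
      linarith
    · have hcp : p ≤ c := by nlinarith [hkey, hc0, hp1, hpgt]
      have hinv : 1 ≤ ‖x‖⁻¹ := by nlinarith [mul_inv_cancel₀ hxpos.ne', inv_nonneg.mpr hxpos.le]
      nlinarith [hinv, hcp, hpgt]
  -- conclude by comparing squared norms
  have hsq : ‖n - ‖x‖⁻¹ • x‖ ^ 2 ≤ ‖a - b‖ ^ 2 := by
    rw [norm_sub_sq_real, norm_sub_sq_real, ha, hb, hn, hu1, hnu]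
    rw [← hp]
    linarith
  calc ‖n - ‖x‖⁻¹ • x‖ = Real.sqrt (‖n - ‖x‖⁻¹ • x‖ ^ 2) := by
        rw [Real.sqrt_sq (norm_nonneg _)]
    _ ≤ Real.sqrt (‖a - b‖ ^ 2) := Real.sqrt_le_sqrt hsq
    _ = ‖a - b‖ := Real.sqrt_sq (norm_nonneg _)
end

section
/- Let U : ℝ → ℝ be differentiable on (0, ∞) and let u : ℝ² → ℝ be the radially symmetric function u(x) = U(‖x‖). Let a and b be distinct points on the unit circle in ℝ² (‖a‖ = ‖b‖ = 1), and let n be a unit vector orthogonal to b − a with ⟨n, a + b⟩ ≥ 0. Then for every point x ≠ 0 on the closed segment joining a and b, the directional derivative of u at x in the direction n satisfies |∇u(x)·n − U′(1)| ≤ |U′(‖x‖) − U′(1)| + |U′(1)| · ‖a − b‖² / 2. -/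
open scoped RealInnerProductSpace


lemma parseval2 (v n e : EuclideanSpace ℝ (Fin 2)) (hn : ⟪n, n⟫ = 1) (hne : ⟪n, e⟫ = 0) :
    ⟪v, n⟫ ^ 2 * ⟪e, e⟫ + ⟪v, e⟫ ^ 2 = ⟪v, v⟫ * ⟪e, e⟫ := by
  simp only [PiLp.inner_apply, RCLike.inner_apply, conj_trivial, Fin.sum_univ_two] at *
  obtain ⟨D, hD0, hD1⟩ : ∃ D, e 0 = -(n 1) * D ∧ e 1 = n 0 * D :=
    ⟨n 0 * e 1 - n 1 * e 0, by linear_combination (-(e 0)) * hn + n 0 * hne,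
      by linear_combination (-(e 1)) * hn + n 1 * hne⟩
  rw [hD0, hD1]
  linear_combination (D ^ 2 * (v 0 * n 0 + v 1 * n 1) ^ 2) * hn

lemma hasFDerivAt_norm' {x : EuclideanSpace ℝ (Fin 2)} (hx : x ≠ 0) :
    HasFDerivAt (fun y : EuclideanSpace ℝ (Fin 2) => ‖y‖) (‖x‖⁻¹ • innerSL ℝ x) x := by
  have hx2 : ‖x‖ ^ 2 ≠ 0 := pow_ne_zero 2 (norm_ne_zero_iff.2 hx)
  have h := ((hasStrictFDerivAt_norm_sq x).hasFDerivAt).sqrt hx2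
  have heq : (fun y : EuclideanSpace ℝ (Fin 2) => Real.sqrt (‖y‖ ^ 2)) = fun y => ‖y‖ := by
    funext y; exact Real.sqrt_sq (norm_nonneg y)
  rw [heq] at h
  convert h using 1
  case e'_12 =>
    ext y
    simp [Real.sqrt_sq (norm_nonneg x), innerSL_apply_apply]
    field_simp
  ext y
  have : Real.sqrt (‖x‖ ^ 2) = ‖x‖ := Real.sqrt_sq (norm_nonneg x)
  simp [this]

lemma geom_aux (r s t : ℝ) (rpos : 0 < r) (hr1 : r ≤ 1) (hs0 : 0 ≤ s) (hsr : s ≤ r)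
    (ht1 : t ≤ 1) (hs2 : s ^ 2 = (1 + t) / 2) : |s / r - 1| ≤ (2 - 2 * t) / 2 := by
  rw [abs_sub_comm, abs_of_nonneg (by rw [sub_nonneg, div_le_one rpos]; exact hsr)]
  have key : t * r ≤ s := by
    rcases le_or_gt t 0 with h | h
    · nlinarith
    · have hts : t ≤ s := by nlinarith [sq_nonneg (s - t), sq_nonneg (s + t)]
      nlinarith
  have h2 : t ≤ s / r := (le_div_iff₀ rpos).2 (by linarith)
  linarith

lemma est_aux (A B c d2 : ℝ) (h1 : |c| ≤ 1) (h2 : |c - 1| ≤ d2 / 2) :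
    |A * c - B| ≤ |A - B| + |B| * d2 / 2 := by
  calc |A * c - B| = |(A - B) * c + B * (c - 1)| := by ring_nf
  _ ≤ |(A - B) * c| + |B * (c - 1)| := abs_add_le _ _
  _ = |A - B| * |c| + |B| * |c - 1| := by rw [abs_mul, abs_mul]
  _ ≤ |A - B| * 1 + |B| * (d2 / 2) := by
      exact add_le_add (mul_le_mul_of_nonneg_left h1 (abs_nonneg _))
        (mul_le_mul_of_nonneg_left h2 (abs_nonneg _))
  _ = |A - B| + |B| * d2 / 2 := by ring

/-- Pointwise estimate for the normal derivative of a radially symmetric function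
along a chord of the unit circle: with `u(x) = U(‖x‖)`, `U` differentiable on
`(0, ∞)`, and `n` the outward unit normal of the chord from `a` to `b` on the unit
circle, for every `x ≠ 0` on the segment `[a, b]`,
`|∇u(x)·n − U′(1)| ≤ |U′(‖x‖) − U′(1)| + |U′(1)| ‖a − b‖² / 2`. -/
theorem radial_normal_derivative_estimate
    (U : ℝ → ℝ) (hU : DifferentiableOn ℝ U (Set.Ioi 0))
    (a b : EuclideanSpace ℝ (Fin 2)) (ha : ‖a‖ = 1) (hb : ‖b‖ = 1) (hab : a ≠ b)
    (n : EuclideanSpace ℝ (Fin 2)) (hn : ‖n‖ = 1)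
    (horth : ⟪n, b - a⟫ = 0) (hout : 0 ≤ ⟪n, a + b⟫) :
    ∀ x ∈ segment ℝ a b, x ≠ 0 →
      |fderiv ℝ (fun y : EuclideanSpace ℝ (Fin 2) => U ‖y‖) x n - deriv U 1| ≤
        |deriv U ‖x‖ - deriv U 1| + |deriv U 1| * ‖a - b‖ ^ 2 / 2 := by
  intro x hx hx0
  have rpos : (0 : ℝ) < ‖x‖ := norm_pos_iff.2 hx0
  have hUd : HasDerivAt U (deriv U ‖x‖) ‖x‖ :=
    (hU.differentiableAt (Ioi_mem_nhds rpos)).hasDerivAt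
  have hcomp : HasFDerivAt (fun y : EuclideanSpace ℝ (Fin 2) => U ‖y‖)
      ((deriv U ‖x‖) • (‖x‖⁻¹ • innerSL ℝ x)) x :=
    hUd.comp_hasFDerivAt x (hasFDerivAt_norm' hx0)
  have hfd : fderiv ℝ (fun y : EuclideanSpace ℝ (Fin 2) => U ‖y‖) x n
      = deriv U ‖x‖ * (⟪n, x⟫ / ‖x‖) := by
    rw [hcomp.fderiv]
    simp only [ContinuousLinearMap.coe_smul', Pi.smul_apply, innerSL_apply_apply, smul_eq_mul]
    rw [real_inner_comm]
    ring
  rw [hfd]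
  -- geometry
  have hnab : ⟪n, a⟫ = ⟪n, b⟫ := by
    have h0 : ⟪n, b⟫ - ⟪n, a⟫ = 0 := by rw [← inner_sub_right]; exact horth
    linarith
  have hsa : ⟪n, x⟫ = ⟪n, a⟫ := by
    obtain ⟨p, q, hp, hq, hpq, rfl⟩ := hx
    rw [inner_add_right, real_inner_smul_right, real_inner_smul_right, ← hnab,
      ← add_mul, hpq, one_mul]
  have hs0 : 0 ≤ ⟪n, x⟫ := by
    have h0 : ⟪n, a + b⟫ = 2 * ⟪n, a⟫ := by rw [inner_add_right, hnab]; ring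
    have h1 := hout
    rw [h0] at h1
    rw [hsa]; linarith
  have hsr : ⟪n, x⟫ ≤ ‖x‖ := by
    calc ⟪n, x⟫ ≤ ‖n‖ * ‖x‖ := real_inner_le_norm n x
    _ = ‖x‖ := by rw [hn, one_mul]
  have hr1 : ‖x‖ ≤ 1 := by
    obtain ⟨p, q, hp, hq, hpq, rfl⟩ := hx
    calc ‖p • a + q • b‖ ≤ ‖p • a‖ + ‖q • b‖ := norm_add_le _ _
    _ = p + q := by rw [norm_smul, norm_smul, ha, hb, Real.norm_eq_abs, Real.norm_eq_abs,
        abs_of_nonneg hp, abs_of_nonneg hq]; ring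
    _ = 1 := hpq
  have ht1 : ⟪a, b⟫ ≤ 1 := by
    calc ⟪a, b⟫ ≤ ‖a‖ * ‖b‖ := real_inner_le_norm a b
    _ = 1 := by rw [ha, hb, one_mul]
  have hd2 : ‖a - b‖ ^ 2 = 2 - 2 * ⟪a, b⟫ := by
    rw [@norm_sub_sq_real, ha, hb]; ring
  have hnn : ⟪n, n⟫ = 1 := by rw [real_inner_self_eq_norm_sq, hn]; norm_num
  have haa : ⟪a, a⟫ = 1 := by rw [real_inner_self_eq_norm_sq, ha]; norm_num
  have hee : ⟪b - a, b - a⟫ = 2 - 2 * ⟪a, b⟫ := by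
    rw [real_inner_self_eq_norm_sq, ← norm_sub_rev]; exact hd2
  have hab' : ⟪a, b - a⟫ = ⟪a, b⟫ - 1 := by rw [inner_sub_right, haa]
  have hna : ⟪a, n⟫ = ⟪n, x⟫ := by rw [real_inner_comm]; exact hsa.symm
  have hpars := parseval2 a n (b - a) hnn horth
  rw [hee, hab', hna, haa] at hpars
  have htlt : ⟪a, b⟫ < 1 := by
    rcases lt_or_eq_of_le ht1 with h | h
    · exact h
    · exfalso
      apply hab
      have hd0 : ‖a - b‖ ^ 2 = 0 := by rw [hd2, h]; ring
      rwa [pow_eq_zero_iff (by norm_num), norm_sub_eq_zero_iff] at hd0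
  have hs2 : ⟪n, x⟫ ^ 2 = (1 + ⟪a, b⟫) / 2 := by
    have h2t : (0:ℝ) < 2 - 2 * ⟪a, b⟫ := by linarith
    have hmul : ⟪n, x⟫ ^ 2 * (2 - 2 * ⟪a, b⟫) = (1 + ⟪a, b⟫) / 2 * (2 - 2 * ⟪a, b⟫) := by
      linear_combination hpars
    exact mul_right_cancel₀ h2t.ne' hmul
  have hc1 : |⟪n, x⟫ / ‖x‖| ≤ 1 := by
    rw [abs_div, abs_of_pos rpos, div_le_one rpos, abs_of_nonneg hs0]; exact hsr
  have hc2 : |⟪n, x⟫ / ‖x‖ - 1| ≤ ‖a - b‖ ^ 2 / 2 := by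
    rw [hd2]
    exact geom_aux ‖x‖ ⟪n, x⟫ ⟪a, b⟫ rpos hr1 hs0 hsr ht1 hs2
  exact est_aux _ _ _ _ hc1 hc2
end
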